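/- For a full-diversity lattice Λ' in ℝⁿ and any nonzero x ∈ Λ' achieving the product distance (∏|x_i| = d_prod(Λ')), the diagonal matrix H with h_i² = (D · d_prod(Λ'))^{2/n} / x_i² satisfies |det H| = D and ‖Hx‖² = n · D^{2/n} · d_prod(Λ')^{2/n}; hence the infimum over H with |det H| = D of min_{x∈Λ'\{0}} ‖Hx‖² equals exactly n D^{2/n} d_prod(Λ')^{2/n}. -/

import Mathlib

open Finset

lemma my_amgm (n : ℕ) (hn : 0 < n) (z : Fin n → ℝ) (hz : ∀ i, 0 ≤ z i) :
    (n : ℝ) * (∏ i, z i) ^ ((1 : ℝ) / n) ≤ ∑ i, z i := by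
  have hn' : (n : ℝ) ≠ 0 := Nat.cast_ne_zero.mpr hn.ne'
  have h := Real.geom_mean_le_arith_mean_weighted Finset.univ
    (fun _ => (1 : ℝ) / n) z (fun i _ => by positivity)
    (by simp [Finset.sum_const, mul_comm]; field_simp)
    (fun i _ => hz i)
  rw [Real.finset_prod_rpow _ _ (fun i _ => hz i)] at h
  calc (n : ℝ) * (∏ i, z i) ^ ((1 : ℝ) / n)
      ≤ (n : ℝ) * ∑ i, (1 : ℝ) / n * z i := by
        apply mul_le_mul_of_nonneg_left h (by positivity)
    _ = ∑ i, z i := by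
        rw [Finset.mul_sum]; congr 1; ext i; field_simp

/-- for `x` achieving the product distance, the diagonal matrix with
`hᵢ² = (D·dprod)^(2/n)/xᵢ²` has `|det H| = D` and achieves
`‖Hx‖² = n·D^(2/n)·dprod^(2/n)`; hence the infimum over `H` with `|det H| = D` of
the minimum squared distance of `HΛ'` equals exactly `n·D^(2/n)·dprod^(2/n)`. -/
theorem min_dist_exact
    (n : ℕ) (hn : 0 < n) (Λ' : Set (Fin n → ℝ))
    (hfull : ∀ y ∈ Λ', y ≠ 0 → ∀ i, y i ≠ 0)
    (dprod : ℝ) (hdpos : 0 < dprod)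
    (hdmin : ∀ y ∈ Λ', y ≠ 0 → dprod ≤ ∏ i, |y i|)
    (D : ℝ) (hD : 0 < D)
    (x : Fin n → ℝ) (hxΛ : x ∈ Λ') (hx0 : x ≠ 0)
    (hxach : ∏ i, |x i| = dprod) :
    (abs (∏ i, (D * dprod) ^ ((1 : ℝ) / n) / |x i|) = D ∧
      ∑ i, ((D * dprod) ^ ((1 : ℝ) / n) / |x i| * x i) ^ 2
        = (n : ℝ) * D ^ ((2 : ℝ) / n) * dprod ^ ((2 : ℝ) / n)) ∧
    sInf {t : ℝ | ∃ h : Fin n → ℝ, |∏ i, h i| = D ∧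
        ∃ y ∈ Λ', y ≠ 0 ∧ t = ∑ i, (h i * y i) ^ 2}
      = (n : ℝ) * D ^ ((2 : ℝ) / n) * dprod ^ ((2 : ℝ) / n) := by
  have hn' : (n : ℝ) ≠ 0 := Nat.cast_ne_zero.mpr hn.ne'
  set A : ℝ := (D * dprod) ^ ((1 : ℝ) / n) with hA
  have hDd : 0 < D * dprod := mul_pos hD hdpos
  have hApos : 0 < A := Real.rpow_pos_of_pos hDd _
  have hxne : ∀ i, x i ≠ 0 := hfull x hxΛ hx0
  have hAn : A ^ n = D * dprod := by
    rw [hA, ← Real.rpow_natCast ((D * dprod) ^ ((1:ℝ)/n)) n,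
      ← Real.rpow_mul hDd.le]
    field_simp
    simp
  have h2n : ((D * dprod) ^ 2) ^ ((1 : ℝ) / n)
      = D ^ ((2 : ℝ) / n) * dprod ^ ((2 : ℝ) / n) := by
    rw [← Real.rpow_natCast (D * dprod) 2, ← Real.rpow_mul hDd.le,
      show ((2 : ℕ) : ℝ) * ((1 : ℝ) / n) = (2 : ℝ) / n by push_cast; ring,
      Real.mul_rpow hD.le hdpos.le]
  have hA2 : A ^ 2 = D ^ ((2 : ℝ) / n) * dprod ^ ((2 : ℝ) / n) := by
    rw [hA, ← Real.rpow_natCast ((D * dprod) ^ ((1:ℝ)/n)) 2,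
      ← Real.rpow_mul hDd.le,
      show (1 : ℝ) / n * ((2 : ℕ) : ℝ) = (2 : ℝ) / n by push_cast; ring,
      Real.mul_rpow hD.le hdpos.le]
  -- part 1a
  have h1a : abs (∏ i, A / |x i|) = D := by
    have : ∏ i, A / |x i| = A ^ n / dprod := by
      rw [Finset.prod_div_distrib, Finset.prod_const, hxach, Finset.card_univ,
        Fintype.card_fin]
    rw [this, hAn, abs_of_pos (by positivity)]
    field_simp
  -- part 1b
  have h1b : ∑ i, (A / |x i| * x i) ^ 2
      = (n : ℝ) * D ^ ((2 : ℝ) / n) * dprod ^ ((2 : ℝ) / n) := by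
    have : ∀ i, (A / |x i| * x i) ^ 2 = A ^ 2 := by
      intro i
      rw [mul_pow, div_pow, sq_abs]
      field_simp [pow_ne_zero 2 (hxne i)]
      exact div_self (hxne i)
    rw [Finset.sum_congr rfl (fun i _ => this i), Finset.sum_const,
      Finset.card_univ, Fintype.card_fin, nsmul_eq_mul, hA2, mul_assoc]
  refine ⟨⟨h1a, h1b⟩, ?_⟩
  set c : ℝ := (n : ℝ) * D ^ ((2 : ℝ) / n) * dprod ^ ((2 : ℝ) / n) with hc
  have hlb : ∀ t ∈ {t : ℝ | ∃ h : Fin n → ℝ, |∏ i, h i| = D ∧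
      ∃ y ∈ Λ', y ≠ 0 ∧ t = ∑ i, (h i * y i) ^ 2}, c ≤ t := by
    rintro t ⟨h, hhD, y, hyΛ, hy0, rfl⟩
    have hyne : ∀ i, y i ≠ 0 := hfull y hyΛ hy0
    have hzprod : (D * dprod) ^ 2 ≤ ∏ i, (h i * y i) ^ 2 := by
      have : ∏ i, (h i * y i) ^ 2 = (|∏ i, h i| * ∏ i, |y i|) ^ 2 := by
        rw [Finset.prod_pow, Finset.prod_mul_distrib, mul_pow, mul_pow,
          sq_abs, ← abs_prod, sq_abs]
      rw [this, hhD]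
      apply pow_le_pow_left₀ hDd.le
      exact mul_le_mul_of_nonneg_left (hdmin y hyΛ hy0) hD.le
    calc c = (n : ℝ) * ((D * dprod) ^ 2) ^ ((1 : ℝ) / n) := by
          rw [hc, h2n, mul_assoc]
      _ ≤ (n : ℝ) * (∏ i, (h i * y i) ^ 2) ^ ((1 : ℝ) / n) := by
          apply mul_le_mul_of_nonneg_left _ (by positivity)
          exact Real.rpow_le_rpow (by positivity) hzprod (by positivity)
      _ ≤ ∑ i, (h i * y i) ^ 2 := my_amgm n hn _ (fun i => sq_nonneg _)
  have hmem : c ∈ {t : ℝ | ∃ h : Fin n → ℝ, |∏ i, h i| = D ∧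
      ∃ y ∈ Λ', y ≠ 0 ∧ t = ∑ i, (h i * y i) ^ 2} :=
    ⟨fun i => A / |x i|, h1a, x, hxΛ, hx0, h1b.symm⟩
  exact le_antisymm (csInf_le ⟨c, hlb⟩ hmem) (le_csInf ⟨c, hmem⟩ hlb)
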